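/- arXiv:1403.6083 — 2 statements merged into one kernel-verified Lean document; each statement's English description precedes it below -/
import Mathlib

section
/- Let R = ℚ[a, x_1, …, x_b] and N ≥ 1. For the quotient module M = R/(a x_1^N, a x_2^N, …, a x_b^N), considered as a ℚ[a]-module, M is isomorphic to M₁^{⊗b} ⊕ (⊕_{j=0}^{b-1} M₀^{⊗j} ⊗ M₁^{⊗(b-1-j)}) ⊗ M_∞, where M₀ = ℚ[a] ⊕ ℚ[a], M₁ = ℚ[a]^{⊕N}, M_∞ = ⊕_{l=0}^{∞} ℚ[a]/(a), and all tensor products are over ℚ[a]. -/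
open Polynomial DirectSum

/-- `n`-fold tensor power (over `ℚ[a]`) of a `ℚ[a]`-module, with `M^{⊗0} = ℚ[a]`. -/
noncomputable def tpow (M : ModuleCat (Polynomial ℚ)) : ℕ → ModuleCat (Polynomial ℚ)
  | 0 => ModuleCat.of (Polynomial ℚ) (Polynomial ℚ)
  | n + 1 => ModuleCat.of (Polynomial ℚ) (TensorProduct (Polynomial ℚ) (tpow M n) M)

/-- `M₀ = ℚ[a] ⊕ ℚ[a]`, a free `ℚ[a]`-module of rank 2. -/
noncomputable def M₀ : ModuleCat (Polynomial ℚ) :=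
  ModuleCat.of (Polynomial ℚ) (Polynomial ℚ × Polynomial ℚ)

/-- `M₁ = ℚ[a]^{⊕N}`, a free `ℚ[a]`-module of rank `N`. -/
noncomputable def M₁ (N : ℕ) : ModuleCat (Polynomial ℚ) :=
  ModuleCat.of (Polynomial ℚ) (Fin N → Polynomial ℚ)

/-- `M_∞ = ⊕_{l=0}^∞ ℚ[a]/(a)`, a countable direct sum of copies of `ℚ[a]/(a)`. -/
noncomputable def Minf : ModuleCat (Polynomial ℚ) :=
  ModuleCat.of (Polynomial ℚ)
    (⨁ _ : ℕ, (Polynomial ℚ ⧸ (Ideal.span {Polynomial.X} : Ideal (Polynomial ℚ))))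

abbrev Rq := Polynomial ℚ

noncomputable def tpowBasis (M : ModuleCat Rq) {c : ℕ} (v : Module.Basis (Fin c) Rq M) :
    ∀ n, Module.Basis (Fin (c ^ n)) Rq (tpow M n)
  | 0 => (Module.Basis.singleton (Fin 1) Rq).reindex (finCongr (pow_zero c).symm)
  | n + 1 =>
      ((tpowBasis M v n).tensorProduct v).reindex
        (finProdFinEquiv.trans (finCongr (pow_succ c n).symm))

abbrev kq := Rq ⧸ (Ideal.span {Polynomial.X} : Ideal Rq)

noncomputable def basisM₀ : Module.Basis (Fin 2) Rq M₀ := Module.Basis.finTwoProd Rq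
noncomputable def basisM₁ (N : ℕ) : Module.Basis (Fin N) Rq (M₁ N) := Pi.basisFun Rq (Fin N)

-- free ⊗ Minf ≅ ℕ →₀ kq, for free of positive finite rank m
noncomputable def freeTensorMinf (M : Type*) [AddCommGroup M] [Module Rq M]
    {m : ℕ} (hm : 0 < m) (v : Module.Basis (Fin m) Rq M) :
    TensorProduct Rq M Minf ≃ₗ[Rq] (ℕ →₀ kq) := by
  haveI : Nonempty (Fin m) := ⟨⟨0, hm⟩⟩
  haveI : Denumerable (Fin m × ℕ) := Denumerable.ofEncodableOfInfinite _
  exact (TensorProduct.congr v.repr (LinearEquiv.refl Rq Minf)) ≪≫ₗ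
    (TensorProduct.finsuppScalarLeft Rq Minf (Fin m)) ≪≫ₗ
    (Finsupp.mapRange.linearEquiv ((finsuppLEquivDirectSum Rq kq ℕ).symm)) ≪≫ₗ
    (Finsupp.finsuppProdLEquiv Rq).symm ≪≫ₗ
    (Finsupp.domLCongr (Denumerable.eqv (Fin m × ℕ)))

noncomputable example (b N : ℕ) (hN : 1 ≤ N) (j : Fin b) :
    TensorProduct Rq
      (TensorProduct Rq (tpow M₀ (j : ℕ)) (tpow (M₁ N) (b - 1 - (j : ℕ)))) Minf
      ≃ₗ[Rq] (ℕ →₀ kq) :=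
  freeTensorMinf _ (Nat.mul_pos (Nat.pow_pos (by norm_num)) (Nat.pow_pos hN))
    (((tpowBasis M₀ basisM₀ (j:ℕ)).tensorProduct (tpowBasis (M₁ N) (basisM₁ N) (b-1-(j:ℕ)))).reindex
      finProdFinEquiv)

noncomputable def rhsEquiv (b N : ℕ) (hN : 1 ≤ N) :
    ((tpow (M₁ N) b) ×
      ⨁ j : Fin b,
        TensorProduct Rq
          (TensorProduct Rq (tpow M₀ (j : ℕ)) (tpow (M₁ N) (b - 1 - (j : ℕ)))) Minf)
      ≃ₗ[Rq] ((Fin (N ^ b) →₀ Rq) × (Fin b × ℕ →₀ kq)) :=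
  LinearEquiv.prodCongr (tpowBasis (M₁ N) (basisM₁ N) b).repr <|
    (DFinsupp.mapRange.linearEquiv fun j : Fin b =>
      freeTensorMinf _
        (Nat.mul_pos (Nat.pow_pos (by norm_num)) (Nat.pow_pos hN))
        (((tpowBasis M₀ basisM₀ (j:ℕ)).tensorProduct
            (tpowBasis (M₁ N) (basisM₁ N) (b-1-(j:ℕ)))).reindex finProdFinEquiv))
    ≪≫ₗ (finsuppLEquivDirectSum Rq (ℕ →₀ kq) (Fin b)).symm
    ≪≫ₗ (Finsupp.finsuppProdLEquiv Rq).symm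

/-- restriction to a subtype as linear map, predicate version -/
noncomputable def lsubP {α : Type*} {M : Type*} [AddCommMonoid M] [Module Rq M]
    (P : α → Prop) : (α →₀ M) →ₗ[Rq] (Subtype P →₀ M) where
  toFun := Finsupp.subtypeDomain P
  map_add' _ _ := Finsupp.subtypeDomain_add
  map_smul' _ _ := Finsupp.ext fun _ => rfl

section
variable (b N : ℕ)

abbrev Mv := MvPolynomial (Fin b) Rq

noncomputable abbrev Ib : Ideal (Mv b) :=
  Ideal.span (Set.range fun i : Fin b =>
    MvPolynomial.C Polynomial.X * (MvPolynomial.X i) ^ N)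

lemma mem_Ib (f : Mv b) :
    f ∈ Ib b N ↔ ∀ e : Fin b →₀ ℕ,
      MvPolynomial.coeff e f ∈ Ideal.span ({Polynomial.X} : Set Rq) ∧
      ((∀ i, e i < N) → MvPolynomial.coeff e f = 0) := by
  constructor
  · intro hf
    refine Submodule.span_induction ?_ ?_ ?_ ?_ hf
    · rintro x ⟨i, rfl⟩ e
      dsimp only
      rw [MvPolynomial.C_mul_X_pow_eq_monomial, MvPolynomial.coeff_monomial]
      split_ifs with h
      · subst h
        refine ⟨Ideal.mem_span_singleton_self _, fun hP => ?_⟩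
        exact absurd (hP i) (by simp)
      · simp
    · simp
    · intro x y _ _ hx hy e
      rw [MvPolynomial.coeff_add]
      exact ⟨Ideal.add_mem _ (hx e).1 (hy e).1,
        fun hP => by rw [(hx e).2 hP, (hy e).2 hP, add_zero]⟩
    · intro r x _ hx e
      rw [smul_eq_mul, MvPolynomial.coeff_mul]
      constructor
      · exact Ideal.sum_mem _ fun c _ => Ideal.mul_mem_left _ _ (hx c.2).1
      · intro hP
        refine Finset.sum_eq_zero fun c hc => ?_
        rw [Finset.HasAntidiagonal.mem_antidiagonal] at hc
        have h2 : ∀ i, c.2 i < N := fun i =>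
          lt_of_le_of_lt (by rw [← hc]; simp) (hP i)
        rw [(hx c.2).2 h2, mul_zero]
  · intro h
    rw [MvPolynomial.as_sum f]
    refine Ideal.sum_mem _ fun v hv => ?_
    have hv0 : MvPolynomial.coeff v f ≠ 0 := MvPolynomial.mem_support_iff.mp hv
    obtain ⟨c, hc⟩ := Ideal.mem_span_singleton.mp (h v).1
    have hnP : ¬ ∀ i, v i < N := fun hP => hv0 ((h v).2 hP)
    push_neg at hnP
    obtain ⟨i, hi⟩ := hnP
    have hle : Finsupp.single i N ≤ v := Finsupp.single_le_iff.mpr hi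
    have : MvPolynomial.monomial v (MvPolynomial.coeff v f)
        = MvPolynomial.monomial (v - Finsupp.single i N) c * (MvPolynomial.C Polynomial.X * (MvPolynomial.X i) ^ N) := by
      rw [MvPolynomial.C_mul_X_pow_eq_monomial, MvPolynomial.monomial_mul, tsub_add_cancel_of_le hle, hc, mul_comm]
    rw [this]
    exact Ideal.mul_mem_left _ _ (Ideal.subset_span ⟨i, rfl⟩)

end

section
variable (b N : ℕ)

/-- small exponents -/
abbrev PS (e : Fin b →₀ ℕ) : Prop := ∀ i, e i < N

noncomputable abbrev Emv : Mv b ≃ₗ[Rq] ((Fin b →₀ ℕ) →₀ Rq) :=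
  (MvPolynomial.basisMonomials (Fin b) Rq).repr

noncomputable def phi : Mv b →ₗ[Rq]
    (Subtype (PS b N) →₀ Rq) × ({e // ¬ PS b N e} →₀ kq) :=
  LinearMap.prod
    (lsubP (PS b N) ∘ₗ (Emv b).toLinearMap)
    ((Finsupp.mapRange.linearMap (Ideal.span {Polynomial.X} : Ideal Rq).mkQ) ∘ₗ
      lsubP (fun e => ¬ PS b N e) ∘ₗ (Emv b).toLinearMap)

lemma phi_surjective : Function.Surjective (phi b N) := by
  classical
  rintro ⟨g₁, g₂⟩
  have hmk : Function.Surjective (Ideal.span {Polynomial.X} : Ideal Rq).mkQ :=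
    Submodule.mkQ_surjective _
  set s : kq → Rq := fun x => if x = 0 then 0 else Function.surjInv hmk x with hs
  have hs0 : s 0 = 0 := by simp [hs]
  have hsr : ∀ x, (Ideal.span {Polynomial.X} : Ideal Rq).mkQ (s x) = x := by
    intro x
    by_cases h : x = 0
    · simp [hs, h]
    · simp [hs, h, Function.surjInv_eq hmk]
  refine ⟨(Emv b).symm (Finsupp.piecewise g₁ (Finsupp.mapRange s hs0 g₂)), ?_⟩
  refine Prod.ext ?_ ?_
  · exact Finsupp.subtypeDomain_piecewise g₁ (Finsupp.mapRange s hs0 g₂)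
  · show Finsupp.mapRange (⇑(Ideal.span {Polynomial.X} : Ideal Rq).mkQ) (map_zero _)
        (Finsupp.subtypeDomain (fun e => ¬ PS b N e)
          (Finsupp.piecewise g₁ (Finsupp.mapRange s hs0 g₂))) = g₂
    rw [Finsupp.subtypeDomain_not_piecewise]
    ext x
    rw [Finsupp.mapRange_apply, Finsupp.mapRange_apply, hsr]

lemma ker_phi : LinearMap.ker (phi b N) = (Ib b N).restrictScalars Rq := by
  ext f
  rw [LinearMap.mem_ker, Submodule.restrictScalars_mem, mem_Ib]
  constructor
  · intro h e
    have h1 : lsubP (PS b N) (Emv b f) = 0 := congrArg Prod.fst h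
    have h2 : Finsupp.mapRange.linearMap (Ideal.span {Polynomial.X} : Ideal Rq).mkQ
        (lsubP (fun e => ¬ PS b N e) (Emv b f)) = 0 := congrArg Prod.snd h
    constructor
    · by_cases hP : PS b N e
      · have h0 : MvPolynomial.coeff e f = 0 := DFunLike.congr_fun h1 ⟨e, hP⟩
        rw [h0]; exact zero_mem _
      · have h0 : Submodule.Quotient.mk (p := (Ideal.span {Polynomial.X} : Ideal Rq))
            (MvPolynomial.coeff e f) = 0 := DFunLike.congr_fun h2 ⟨e, hP⟩
        exact (Submodule.Quotient.mk_eq_zero _).mp h0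
    · intro hP
      exact DFunLike.congr_fun h1 ⟨e, hP⟩
  · intro h
    refine Prod.ext ?_ ?_
    · show lsubP (PS b N) ((Emv b) f) = 0
      exact Finsupp.ext fun e => (h e.1).2 e.2
    · show Finsupp.mapRange.linearMap _ ((lsubP (fun e => ¬ PS b N e)) ((Emv b) f)) = 0
      exact Finsupp.ext fun e => (Submodule.Quotient.mk_eq_zero _).mpr (h e.1).1

end

section
variable (b N : ℕ)

noncomputable def lhsEquiv :
    (Mv b ⧸ Ib b N) ≃ₗ[Rq] (Subtype (PS b N) →₀ Rq) × ({e // ¬ PS b N e} →₀ kq) :=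
  (Submodule.Quotient.restrictScalarsEquiv Rq (Ib b N)).symm ≪≫ₗ
  Submodule.quotEquivOfEq _ _ (ker_phi b N).symm ≪≫ₗ
  (phi b N).quotKerEquivOfSurjective (phi_surjective b N)

noncomputable def smallEquiv : Subtype (PS b N) ≃ (Fin b → Fin N) where
  toFun s i := ⟨s.1 i, s.2 i⟩
  invFun g := ⟨Finsupp.equivFunOnFinite.symm fun i => (g i : ℕ), fun i => by
    simp [Finsupp.equivFunOnFinite]; exact (g i).isLt⟩
  left_inv s := Subtype.ext (Finsupp.ext fun i => by simp [Finsupp.equivFunOnFinite])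
  right_inv g := funext fun i => Fin.ext (by simp [Finsupp.equivFunOnFinite]; rfl)

noncomputable def smallEquivFin : Subtype (PS b N) ≃ Fin (N ^ b) :=
  (smallEquiv b N).trans (Fintype.equivFinOfCardEq (by simp))

lemma bigEquiv (hN : 1 ≤ N) : Nonempty ({e : Fin b →₀ ℕ // ¬ PS b N e} ≃ (Fin b × ℕ)) := by
  rcases Nat.eq_zero_or_pos b with hb | hb
  · subst hb
    have : IsEmpty {e : Fin 0 →₀ ℕ // ¬ PS 0 N e} := ⟨fun e => e.2 fun i => i.elim0⟩
    exact ⟨Equiv.equivOfIsEmpty _ _⟩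
  · haveI : Nonempty (Fin b) := ⟨⟨0, hb⟩⟩
    haveI : Infinite {e : Fin b →₀ ℕ // ¬ PS b N e} := Infinite.of_injective
      (fun n : ℕ => ⟨Finsupp.single ⟨0, hb⟩ (N + n),
        fun hP => absurd (hP ⟨0, hb⟩) (by simp)⟩)
      (fun m n h => by
        have := congrArg (fun f => f.1 ⟨0, hb⟩) h
        simpa using this)
    obtain ⟨d⟩ := nonempty_denumerable {e : Fin b →₀ ℕ // ¬ PS b N e}
    obtain ⟨d'⟩ := nonempty_denumerable (Fin b × ℕ)
    exact ⟨(@Denumerable.eqv _ d).trans (@Denumerable.eqv _ d').symm⟩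

end

/-- For `R = ℚ[a, x₁, …, x_b]` (realized as `MvPolynomial (Fin b) ℚ[a]`) and `N ≥ 1`,
the `ℚ[a]`-module `M = R/(a x₁^N, …, a x_b^N)` is isomorphic to
`M₁^{⊗b} ⊕ (⊕_{j=0}^{b-1} M₀^{⊗j} ⊗ M₁^{⊗(b-1-j)}) ⊗ M_∞`,
all tensor products being over `ℚ[a]`. -/
theorem stmt_8 (b N : ℕ) (hN : 1 ≤ N) :
    Nonempty
      ((MvPolynomial (Fin b) (Polynomial ℚ) ⧸
          (Ideal.span (Set.range fun i : Fin b =>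
            MvPolynomial.C Polynomial.X * (MvPolynomial.X i) ^ N) :
              Ideal (MvPolynomial (Fin b) (Polynomial ℚ))))
        ≃ₗ[Polynomial ℚ]
        ((tpow (M₁ N) b) ×
          ⨁ j : Fin b,
            TensorProduct (Polynomial ℚ)
              (TensorProduct (Polynomial ℚ) (tpow M₀ (j : ℕ)) (tpow (M₁ N) (b - 1 - (j : ℕ))))
              Minf)) := by
  obtain ⟨eBig⟩ := bigEquiv b N hN
  exact ⟨(lhsEquiv b N) ≪≫ₗ
    (LinearEquiv.prodCongr (Finsupp.domLCongr (smallEquivFin b N)) (Finsupp.domLCongr eBig)) ≪≫ₗ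
    (rhsEquiv b N hN).symm⟩
end

section
/- Let μ = τ_{i_1}⋯τ_{i_m} be a word in symbols τ₁,…,τ_{b−1} with m ≥ 2 such that i₁ = i_m = i and i_l < i for all 1 < l < m. Then, by a finite sequence of swaps of adjacent letters τ_p τ_q ↦ τ_q τ_p with |p − q| > 1, μ can be transformed into a word containing a consecutive segment of the form τ_j τ_j or τ_j τ_{j−1} τ_j for some j ≤ i. -/
/-- A type I₁ move on words in the alphabet `{τ₁, τ₂, …}` (letters encoded by their
indices): swapping two adjacent letters `τ_p τ_q ↦ τ_q τ_p` when `|p − q| > 1`. -/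
inductive SwapMove : List ℕ → List ℕ → Prop
  | swap (u v : List ℕ) (p q : ℕ) (h : p + 1 < q ∨ q + 1 < p) :
      SwapMove (u ++ [p, q] ++ v) (u ++ [q, p] ++ v)

lemma SwapMove.ctx {a b : List ℕ} (w z : List ℕ) (h : SwapMove a b) :
    SwapMove (w ++ a ++ z) (w ++ b ++ z) := by
  rcases h with ⟨u, v, p, q, hpq⟩
  have := SwapMove.swap (w ++ u) (v ++ z) p q hpq
  simpa [List.append_assoc] using this

lemma rtg_ctx {a b : List ℕ} (w z : List ℕ) (h : Relation.ReflTransGen SwapMove a b) :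
    Relation.ReflTransGen SwapMove (w ++ a ++ z) (w ++ b ++ z) := by
  induction h with
  | refl => exact .refl
  | tail _ h ih => exact ih.tail (h.ctx w z)

lemma move_right (p : ℕ) (l v : List ℕ) (h : ∀ x ∈ l, x + 1 < p) :
    Relation.ReflTransGen SwapMove (p :: (l ++ v)) (l ++ p :: v) := by
  induction l with
  | nil => exact .refl
  | cons a l ih =>
    have h1 : SwapMove ([] ++ [p, a] ++ (l ++ v)) ([] ++ [a, p] ++ (l ++ v)) :=
      SwapMove.swap [] (l ++ v) p a (Or.inr (h a (by simp)))
    have h2 := rtg_ctx [a] ([] : List ℕ) (ih (fun x hx => h x (by simp [hx])))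
    simp only [List.append_nil] at h1 h2 ⊢
    exact Relation.ReflTransGen.trans (.single h1) (by simpa using h2)

lemma move_left (p : ℕ) (l v : List ℕ) (h : ∀ x ∈ l, x + 1 < p) :
    Relation.ReflTransGen SwapMove (l ++ p :: v) (p :: (l ++ v)) := by
  induction l with
  | nil => exact .refl
  | cons a l ih =>
    have h2 := rtg_ctx [a] ([] : List ℕ) (ih (fun x hx => h x (by simp [hx])))
    have h1 : SwapMove ([] ++ [a, p] ++ (l ++ v)) ([] ++ [p, a] ++ (l ++ v)) :=
      SwapMove.swap [] (l ++ v) a p (Or.inl (h a (by simp)))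
    simp only [List.append_nil] at h1 h2 ⊢
    exact Relation.ReflTransGen.trans (by simpa using h2) (.single h1)

lemma first_split {x : ℕ} : ∀ {l : List ℕ}, x ∈ l → ∃ a c, l = a ++ x :: c ∧ x ∉ a := by
  intro l hl
  induction l with
  | nil => simp at hl
  | cons b l ih =>
    by_cases hb : x = b
    · exact ⟨[], l, by simp [hb], by simp⟩
    · rcases ih (by
          rcases List.mem_cons.1 hl with h | h
          · exact absurd h hb
          · exact h) with
        ⟨a, c, rfl, hna⟩
      exact ⟨b :: a, c, by simp, by simp [hna, hb]⟩

/-- Lemma 3.5 of Wu: if `μ = τ_{i₁}⋯τ_{i_m}` with `m ≥ 2`, `i₁ = i_m = i`, and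
`i_l < i` for `1 < l < m`, then by a finite sequence of type I₁ moves `μ` can be
transformed into a word containing a segment `τ_j τ_j` or `τ_j τ_{j−1} τ_j` for some
`j ≤ i`. -/
theorem stmt_11 (i : ℕ) (mid : List ℕ) (hmid : ∀ x ∈ mid, x < i) :
    ∃ ν : List ℕ, Relation.ReflTransGen SwapMove (i :: (mid ++ [i])) ν ∧
      ∃ (u v : List ℕ) (j : ℕ), j ≤ i ∧
        (ν = u ++ [j, j] ++ v ∨ ν = u ++ [j, j - 1, j] ++ v) := by
  induction i using Nat.strong_induction_on generalizing mid with
  | _ i ih =>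
  by_cases hm : i - 1 ∈ mid ∧ 1 ≤ i
  · obtain ⟨hmem, hi1⟩ := hm
    obtain ⟨a, c, rfl, hna⟩ := first_split hmem
    by_cases hc : i - 1 ∈ c
    · -- two occurrences of i-1: recurse on the inner segment
      obtain ⟨a', c', rfl, hna'⟩ := first_split hc
      have hmid' : ∀ x ∈ a', x < i - 1 := by
        intro x hx
        have h1 : x < i := hmid x (by simp [hx])
        have h2 : x ≠ i - 1 := fun h => hna' (h ▸ hx)
        omega
      obtain ⟨ν', hrtg', u, v, j, hj, hpat⟩ := ih (i - 1) (by omega) a' hmid'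
      refine ⟨(i :: a) ++ ν' ++ (c' ++ [i]), ?_, ?_⟩
      · have := rtg_ctx (i :: a) (c' ++ [i]) hrtg'
        have heq : i :: ((a ++ (i - 1) :: (a' ++ (i - 1) :: c')) ++ [i]) =
            (i :: a) ++ ((i - 1) :: (a' ++ [i - 1])) ++ (c' ++ [i]) := by
          simp [List.append_assoc]
        rw [heq]; exact this
      · rcases hpat with h | h
        · exact ⟨(i :: a) ++ u, v ++ (c' ++ [i]), j, le_trans hj (by omega),
            Or.inl (by rw [h]; simp [List.append_assoc])⟩
        · exact ⟨(i :: a) ++ u, v ++ (c' ++ [i]), j, le_trans hj (by omega),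
            Or.inr (by rw [h]; simp [List.append_assoc])⟩
    · -- exactly one occurrence of i-1
      have ha : ∀ x ∈ a, x + 1 < i := by
        intro x hx
        have h1 : x < i := hmid x (by simp [hx])
        have h2 : x ≠ i - 1 := fun h => hna (h ▸ hx)
        omega
      have hcc : ∀ x ∈ c, x + 1 < i := by
        intro x hx
        have h1 : x < i := hmid x (by simp [hx])
        have h2 : x ≠ i - 1 := fun h => hc (h ▸ hx)
        omega
      refine ⟨a ++ [i, i - 1, i] ++ c, ?_, a, c, i, le_refl i, Or.inr rfl⟩
      have s1 : Relation.ReflTransGen SwapMove (i :: (a ++ ((i - 1) :: (c ++ [i]))))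
          (a ++ i :: (i - 1) :: (c ++ [i])) := move_right i a _ ha
      have s2 : Relation.ReflTransGen SwapMove (c ++ i :: ([] : List ℕ))
          (i :: (c ++ [])) := move_left i c [] hcc
      have s2' := rtg_ctx (a ++ [i, i - 1]) ([] : List ℕ) s2
      have heq : i :: ((a ++ (i - 1) :: c) ++ [i]) = i :: (a ++ ((i - 1) :: (c ++ [i]))) := by
        simp [List.append_assoc]
      rw [heq]
      refine Relation.ReflTransGen.trans s1 ?_
      have e1 : a ++ i :: (i - 1) :: (c ++ [i]) = (a ++ [i, i - 1]) ++ (c ++ i :: []) ++ [] := by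
        simp [List.append_assoc]
      have e2 : (a ++ [i, i - 1]) ++ (i :: (c ++ [])) ++ [] = a ++ [i, i - 1, i] ++ c := by
        simp [List.append_assoc]
      rw [e1, ← e2]; exact s2'
  · -- i-1 does not occur: move i all the way right
    have h : ∀ x ∈ mid, x + 1 < i := by
      intro x hx
      have h1 : x < i := hmid x hx
      have h2 : ¬(i - 1 ∈ mid ∧ 1 ≤ i) := hm
      by_cases hi : 1 ≤ i
      · have : i - 1 ∉ mid := fun hmm => h2 ⟨hmm, hi⟩
        have : x ≠ i - 1 := fun he => this (he ▸ hx)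
        omega
      · omega
    refine ⟨mid ++ [i, i], ?_, mid, [], i, le_refl i, Or.inl (by simp)⟩
    have := move_right i mid [i] h
    simpa using this
end
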